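/- Under the small-bids assumption, water levels are Lipschitz: let f be monotone submodular with f(∅)=0 on finite E, b ∈ ℝ>0^E costs with b_e ≤ ε·f_T({e}) for all e ∈ E and T ⊆ E with f_T({e}) > 0. Let x ∈ ℝ≥0^E and y = x + t·1_e for some t ≥ 0 and e ∈ E. Then w^{by}_e ≤ w^{bx}_e + εt, where w^{bz} denotes the water level vector of the vector (b_{e'} z_{e'})_{e'}. -/

import Mathlib

open Finset

variable {E : Type*} [Fintype E] [DecidableEq E]

noncomputable def waterLevel (f : Finset E → ℝ) (x : E → ℝ) (e : E) : ℝ :=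
  sSup {r | ∃ S : Finset E, e ∈ S ∧
    r = sInf {q | ∃ T : Finset E, f ({e} ∪ T) - f T ≠ 0 ∧
      q = (∑ a ∈ S \ T, x a) / (f (S ∪ T) - f T)}}

theorem waterLevel_lipschitz_small_bids (f : Finset E → ℝ) (b x : E → ℝ)
    (ε : ℝ) (hε : 0 < ε)
    (hmono : ∀ A B : Finset E, A ⊆ B → f A ≤ f B)
    (hsub : ∀ A B : Finset E, f (A ∪ B) + f (A ∩ B) ≤ f A + f B)
    (h0 : f ∅ = 0) (hpos : ∀ e : E, 0 < f {e})
    (hb : ∀ e, 0 < b e)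
    -- small bids assumption
    (hsmall : ∀ (e : E) (T : Finset E), 0 < f ({e} ∪ T) - f T →
      b e ≤ ε * (f ({e} ∪ T) - f T))
    (hx : ∀ e, 0 ≤ x e)
    (e : E) (t : ℝ) (ht : 0 ≤ t)
    (y : E → ℝ) (hy : y = fun e' => x e' + if e' = e then t else 0) :
    waterLevel f (fun e' => b e' * y e') e ≤
      waterLevel f (fun e' => b e' * x e') e + ε * t := by
  classical
  subst hy
  have hεt : 0 ≤ ε * t := mul_nonneg hε.le ht
  have hfe : 0 < f {e} := hpos e
  have hd : ∀ T : Finset E, f ({e} ∪ T) - f T ≠ 0 → 0 < f ({e} ∪ T) - f T := fun T hT =>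
    lt_of_le_of_ne (sub_nonneg.mpr (hmono T _ Finset.subset_union_right)) (Ne.symm hT)
  have hD : ∀ (S T : Finset E), e ∈ S → f ({e} ∪ T) - f T ≤ f (S ∪ T) - f T := by
    intro S T heS
    exact sub_le_sub_right (hmono _ _ (Finset.union_subset_union
      (Finset.singleton_subset_iff.mpr heS) le_rfl)) _
  have hDpos : ∀ (S T : Finset E), e ∈ S → f ({e} ∪ T) - f T ≠ 0 →
      0 < f (S ∪ T) - f T := fun S T heS hT => lt_of_lt_of_le (hd T hT) (hD S T heS)
  have hcond0 : f ({e} ∪ (∅ : Finset E)) - f ∅ ≠ 0 := by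
    rw [Finset.union_empty, h0, sub_zero]; exact hfe.ne'
  -- set-valued abbreviations
  have hy0 : ∀ a : E, 0 ≤ b a * (x a + if a = e then t else 0) := by
    intro a
    refine mul_nonneg (hb a).le (add_nonneg (hx a) ?_)
    split <;> simp [ht]
  have hQYbdd : ∀ S : Finset E, e ∈ S → BddBelow
      {q | ∃ T : Finset E, f ({e} ∪ T) - f T ≠ 0 ∧
        q = (∑ a ∈ S \ T, b a * (x a + if a = e then t else 0)) / (f (S ∪ T) - f T)} := by
    intro S heS
    refine ⟨0, ?_⟩
    rintro q ⟨T, hT, rfl⟩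
    exact div_nonneg (Finset.sum_nonneg fun a _ => hy0 a) (hDpos S T heS hT).le
  have hQXbdd : ∀ S : Finset E, e ∈ S → BddBelow
      {q | ∃ T : Finset E, f ({e} ∪ T) - f T ≠ 0 ∧
        q = (∑ a ∈ S \ T, b a * x a) / (f (S ∪ T) - f T)} := by
    intro S heS
    refine ⟨0, ?_⟩
    rintro q ⟨T, hT, rfl⟩
    exact div_nonneg (Finset.sum_nonneg fun a _ => mul_nonneg (hb a).le (hx a))
      (hDpos S T heS hT).le
  have key : ∀ S : Finset E, e ∈ S →
      sInf {q | ∃ T : Finset E, f ({e} ∪ T) - f T ≠ 0 ∧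
        q = (∑ a ∈ S \ T, b a * (x a + if a = e then t else 0)) / (f (S ∪ T) - f T)} ≤
      sInf {q | ∃ T : Finset E, f ({e} ∪ T) - f T ≠ 0 ∧
        q = (∑ a ∈ S \ T, b a * x a) / (f (S ∪ T) - f T)} + ε * t := by
    intro S heS
    rw [← sub_le_iff_le_add]
    refine le_csInf ⟨(∑ a ∈ S \ (∅ : Finset E), b a * x a) / (f (S ∪ ∅) - f ∅), ∅, hcond0, rfl⟩ ?_
    rintro q ⟨T, hT, rfl⟩
    rw [sub_le_iff_le_add]
    refine le_trans (csInf_le (hQYbdd S heS) ⟨T, hT, rfl⟩) ?_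
    have hnum : (∑ a ∈ S \ T, b a * (x a + if a = e then t else 0))
        = (∑ a ∈ S \ T, b a * x a) + (if e ∈ S \ T then b e * t else 0) := by
      simp only [mul_add, Finset.sum_add_distrib, mul_ite, mul_zero]
      congr 1
      exact Finset.sum_ite_eq' _ _ _
    rw [hnum, add_div]
    refine add_le_add_right ?_ _
    by_cases heT : e ∈ S \ T
    · rw [if_pos heT, div_le_iff₀ (hDpos S T heS hT)]
      have h1 : b e ≤ ε * (f ({e} ∪ T) - f T) := hsmall e T (hd T hT)
      nlinarith [hD S T heS, hd T hT, mul_le_mul_of_nonneg_right h1 ht,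
        mul_le_mul_of_nonneg_left (hD S T heS) hεt]
    · rw [if_neg heT, zero_div]
      exact hεt
  have hBddX : BddAbove {r | ∃ S : Finset E, e ∈ S ∧
      r = sInf {q | ∃ T : Finset E, f ({e} ∪ T) - f T ≠ 0 ∧
        q = (∑ a ∈ S \ T, b a * x a) / (f (S ∪ T) - f T)}} := by
    refine ⟨(∑ a, b a * x a) / f {e}, ?_⟩
    rintro r ⟨S, heS, rfl⟩
    have h1 : sInf {q | ∃ T : Finset E, f ({e} ∪ T) - f T ≠ 0 ∧
        q = (∑ a ∈ S \ T, b a * x a) / (f (S ∪ T) - f T)} ≤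
        (∑ a ∈ S \ ∅, b a * x a) / (f (S ∪ ∅) - f ∅) :=
      csInf_le (hQXbdd S heS) ⟨∅, hcond0, rfl⟩
    refine h1.trans ?_
    rw [Finset.sdiff_empty, Finset.union_empty, h0, sub_zero]
    refine div_le_div₀ (Finset.sum_nonneg fun a _ => mul_nonneg (hb a).le (hx a)) ?_ hfe
      (hmono {e} S (Finset.singleton_subset_iff.mpr heS))
    exact Finset.sum_le_sum_of_subset_of_nonneg (Finset.subset_univ S)
      (fun a _ _ => mul_nonneg (hb a).le (hx a))
  show sSup {r | ∃ S : Finset E, e ∈ S ∧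
      r = sInf {q | ∃ T : Finset E, f ({e} ∪ T) - f T ≠ 0 ∧
        q = (∑ a ∈ S \ T, b a * (x a + if a = e then t else 0)) / (f (S ∪ T) - f T)}} ≤
    sSup {r | ∃ S : Finset E, e ∈ S ∧
      r = sInf {q | ∃ T : Finset E, f ({e} ∪ T) - f T ≠ 0 ∧
        q = (∑ a ∈ S \ T, b a * x a) / (f (S ∪ T) - f T)}} + ε * t
  refine csSup_le ⟨sInf {q | ∃ T : Finset E, f ({e} ∪ T) - f T ≠ 0 ∧
      q = (∑ a ∈ ({e} : Finset E) \ T, b a * (x a + if a = e then t else 0)) / (f ({e} ∪ T) - f T)},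
    {e}, Finset.mem_singleton_self e, rfl⟩ ?_
  rintro r ⟨S, heS, rfl⟩
  refine (key S heS).trans (add_le_add_left ?_ _)
  exact le_csSup hBddX ⟨S, heS, rfl⟩
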